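/- Let x₀, y₀ ∈ ℝ, let g : [x₀,∞) × [y₀,∞) → ℝ and K : [x₀,∞) × [y₀,∞) × [x₀,∞) × [y₀,∞) × ℝ → ℝ be continuous, and let p, q, r : [x₀,∞) × [y₀,∞) → [0,∞) be continuous such that (i) |K(x,y,η,τ,u) − K(x,y,η,τ,v)| ≤ q(x,y) r(η,τ) |u − v| for all arguments and all u, v ∈ ℝ, and (ii) |g(x,y) + ∫_{x₀}^{x} ∫_{x₀}^{s} ∫_{y₀}^{y} K(x,y,η,τ,0) dτ dη ds| ≤ p(x,y) for all x ≥ x₀ and y ≥ y₀. If a continuous function u : [x₀,∞) × [y₀,∞) → ℝ satisfies u(x,y) = g(x,y) + ∫_{x₀}^{x} ∫_{x₀}^{s} ∫_{y₀}^{y} K(x,y,η,τ,u(η,τ)) dτ dη ds for all x ≥ x₀ and y ≥ y₀, then |u(x,y)| ≤ p(x,y) + q(x,y) · ( ∫_{x₀}^{x} ∫_{x₀}^{s} ∫_{y₀}^{y} r(η,τ) p(η,τ) dτ dη ds ) · exp( ∫_{x₀}^{x} ∫_{x₀}^{s} ∫_{y₀}^{y} r(η,τ) q(η,τ) dτ dη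 ds ) for all x ≥ x₀ and y ≥ y₀. -/

import Mathlib

open intervalIntegral MeasureTheory Set

noncomputable def D2 (x₀ x : ℝ) (f : ℝ → ℝ) : ℝ := ∫ s in x₀..x, ∫ η in x₀..s, f η

noncomputable def T3 (x₀ y₀ x y : ℝ) (f : ℝ → ℝ → ℝ) : ℝ :=
  D2 x₀ x (fun η => ∫ τ in y₀..y, f η τ)

lemma prim_cont {f : ℝ → ℝ} (x₀ : ℝ) (hf : Continuous f) :
    Continuous fun x => ∫ t in x₀..x, f t :=
  intervalIntegral.continuous_primitive (fun a b => hf.intervalIntegrable a b) x₀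

lemma D2_cont {f : ℝ → ℝ} (x₀ : ℝ) (hf : Continuous f) :
    Continuous fun x => D2 x₀ x f :=
  prim_cont x₀ (prim_cont x₀ hf)

lemma D2_mono {x₀ x : ℝ} (hx : x₀ ≤ x) {f g : ℝ → ℝ} (hf : Continuous f)
    (hg : Continuous g) (h : ∀ t ∈ Icc x₀ x, f t ≤ g t) :
    D2 x₀ x f ≤ D2 x₀ x g := by
  apply intervalIntegral.integral_mono_on hx
    ((prim_cont x₀ hf).intervalIntegrable _ _) ((prim_cont x₀ hg).intervalIntegrable _ _)
  intro s hs
  apply intervalIntegral.integral_mono_on hs.1 (hf.intervalIntegrable _ _)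
    (hg.intervalIntegrable _ _)
  exact fun t ht => h t ⟨ht.1, ht.2.trans hs.2⟩

lemma D2_nonneg {x₀ x : ℝ} (hx : x₀ ≤ x) {f : ℝ → ℝ}
    (h : ∀ t ∈ Icc x₀ x, 0 ≤ f t) : 0 ≤ D2 x₀ x f := by
  apply intervalIntegral.integral_nonneg hx
  intro s hs
  exact intervalIntegral.integral_nonneg hs.1 fun t ht => h t ⟨ht.1, ht.2.trans hs.2⟩

lemma D2_add {x₀ x : ℝ} {f g : ℝ → ℝ} (hf : Continuous f) (hg : Continuous g) :
    D2 x₀ x (fun t => f t + g t) = D2 x₀ x f + D2 x₀ x g := by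
  rw [D2, D2, D2, ← intervalIntegral.integral_add
    ((prim_cont x₀ hf).intervalIntegrable _ _) ((prim_cont x₀ hg).intervalIntegrable _ _)]
  apply intervalIntegral.integral_congr
  intro s _
  exact intervalIntegral.integral_add (hf.intervalIntegrable _ _) (hg.intervalIntegrable _ _)

lemma D2_const_mul {x₀ x : ℝ} (c : ℝ) (f : ℝ → ℝ) :
    D2 x₀ x (fun t => c * f t) = c * D2 x₀ x f := by
  simp only [D2, intervalIntegral.integral_const_mul]

lemma D2_mono_right {x₀ s t : ℝ} (hs : x₀ ≤ s) (hst : s ≤ t) {f : ℝ → ℝ}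
    (hf : Continuous f) (h : ∀ v ∈ Icc x₀ t, 0 ≤ f v) : D2 x₀ s f ≤ D2 x₀ t f := by
  have hint : ∀ a b : ℝ, IntervalIntegrable (fun s => ∫ η in x₀..s, f η) volume a b :=
    fun a b => (prim_cont x₀ hf).intervalIntegrable a b
  have hadd := intervalIntegral.integral_add_adjacent_intervals (hint x₀ s) (hint s t)
  have hnn : 0 ≤ ∫ σ in s..t, ∫ η in x₀..σ, f η := by
    apply intervalIntegral.integral_nonneg hst
    intro σ hσ
    exact intervalIntegral.integral_nonneg (hs.trans hσ.1)
      (fun v hv => h v ⟨hv.1, hv.2.trans (hσ.2.trans le_rfl)⟩)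
  rw [D2, D2, ← hadd]; linarith

lemma D2_abs {x₀ x : ℝ} (hx : x₀ ≤ x) {f : ℝ → ℝ} (hf : Continuous f) :
    |D2 x₀ x f| ≤ D2 x₀ x (fun t => |f t|) := by
  refine (intervalIntegral.abs_integral_le_integral_abs hx).trans ?_
  apply intervalIntegral.integral_mono_on hx
    ((prim_cont x₀ hf).abs.intervalIntegrable _ _)
    ((prim_cont x₀ hf.abs).intervalIntegrable _ _)
  exact fun s hs => intervalIntegral.abs_integral_le_integral_abs hs.1

lemma inner_cont {f : ℝ → ℝ → ℝ} (hf : Continuous fun z : ℝ × ℝ => f z.1 z.2)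
    (y₀ y : ℝ) : Continuous fun η => ∫ τ in y₀..y, f η τ :=
  intervalIntegral.continuous_parametric_intervalIntegral_of_continuous' hf y₀ y

lemma cont_right (f : ℝ → ℝ → ℝ) (hf : Continuous fun z : ℝ × ℝ => f z.1 z.2)
    (η : ℝ) : Continuous fun τ => f η τ :=
  hf.comp (Continuous.prodMk_right η)

lemma T3_congr {x₀ y₀ x y : ℝ} (hx : x₀ ≤ x) (hy : y₀ ≤ y) {f g : ℝ → ℝ → ℝ}
    (h : ∀ η τ, x₀ ≤ η → η ≤ x → y₀ ≤ τ → τ ≤ y → f η τ = g η τ) :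
    T3 x₀ y₀ x y f = T3 x₀ y₀ x y g := by
  apply intervalIntegral.integral_congr
  intro s hs
  rw [uIcc_of_le hx] at hs
  apply intervalIntegral.integral_congr
  intro η hη
  rw [uIcc_of_le hs.1] at hη
  apply intervalIntegral.integral_congr
  intro τ hτ
  rw [uIcc_of_le hy] at hτ
  exact h η τ hη.1 (hη.2.trans hs.2) hτ.1 hτ.2

lemma T3_sub {x₀ y₀ x y : ℝ} {f g : ℝ → ℝ → ℝ}
    (hf : Continuous fun z : ℝ × ℝ => f z.1 z.2)
    (hg : Continuous fun z : ℝ × ℝ => g z.1 z.2) :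
    T3 x₀ y₀ x y f - T3 x₀ y₀ x y g = T3 x₀ y₀ x y (fun η τ => f η τ - g η τ) := by
  rw [T3, T3, T3, D2, D2, D2, ← intervalIntegral.integral_sub
    ((prim_cont x₀ (inner_cont hf y₀ y)).intervalIntegrable _ _)
    ((prim_cont x₀ (inner_cont hg y₀ y)).intervalIntegrable _ _)]
  apply intervalIntegral.integral_congr
  intro s _
  show (∫ η in x₀..s, ∫ τ in y₀..y, f η τ) - (∫ η in x₀..s, ∫ τ in y₀..y, g η τ) = _
  rw [← intervalIntegral.integral_sub ((inner_cont hf y₀ y).intervalIntegrable _ _)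
    ((inner_cont hg y₀ y).intervalIntegrable _ _)]
  apply intervalIntegral.integral_congr
  intro η _
  exact (intervalIntegral.integral_sub ((cont_right f hf η).intervalIntegrable _ _)
    ((cont_right g hg η).intervalIntegrable _ _)).symm

lemma T3_mono {x₀ y₀ x y : ℝ} (hx : x₀ ≤ x) (hy : y₀ ≤ y) {f g : ℝ → ℝ → ℝ}
    (hf : Continuous fun z : ℝ × ℝ => f z.1 z.2)
    (hg : Continuous fun z : ℝ × ℝ => g z.1 z.2)
    (h : ∀ η τ, f η τ ≤ g η τ) :
    T3 x₀ y₀ x y f ≤ T3 x₀ y₀ x y g := by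
  apply D2_mono hx (inner_cont hf y₀ y) (inner_cont hg y₀ y)
  intro η _
  apply intervalIntegral.integral_mono_on hy ((cont_right f hf η).intervalIntegrable _ _)
    ((cont_right g hg η).intervalIntegrable _ _)
  exact fun τ _ => h η τ

lemma T3_abs {x₀ y₀ x y : ℝ} (hx : x₀ ≤ x) (hy : y₀ ≤ y) {f : ℝ → ℝ → ℝ}
    (hf : Continuous fun z : ℝ × ℝ => f z.1 z.2) :
    |T3 x₀ y₀ x y f| ≤ T3 x₀ y₀ x y (fun η τ => |f η τ|) := by
  refine (D2_abs hx (inner_cont hf y₀ y)).trans ?_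
  apply D2_mono hx (inner_cont hf y₀ y).abs (inner_cont hf.abs y₀ y)
  intro η _
  exact intervalIntegral.abs_integral_le_integral_abs hy

lemma T3_const_mul {x₀ y₀ x y : ℝ} (c : ℝ) (f : ℝ → ℝ → ℝ) :
    T3 x₀ y₀ x y (fun η τ => c * f η τ) = c * T3 x₀ y₀ x y f := by
  simp only [T3, D2, intervalIntegral.integral_const_mul]

lemma gronwall_aux (x₀ y₀ Y : ℝ) (hY : y₀ ≤ Y) (P Q R U : ℝ → ℝ → ℝ)
    (hP : Continuous fun z : ℝ × ℝ => P z.1 z.2)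
    (hQ : Continuous fun z : ℝ × ℝ => Q z.1 z.2)
    (hR : Continuous fun z : ℝ × ℝ => R z.1 z.2)
    (hU : Continuous fun z : ℝ × ℝ => U z.1 z.2)
    (hPn : ∀ x y, 0 ≤ P x y) (hQn : ∀ x y, 0 ≤ Q x y)
    (hRn : ∀ x y, 0 ≤ R x y) (hUn : ∀ x y, 0 ≤ U x y)
    (hmain : ∀ x y, x₀ ≤ x → y₀ ≤ y →
      U x y ≤ P x y + Q x y * T3 x₀ y₀ x y (fun η τ => R η τ * U η τ))
    (X : ℝ) (hX : x₀ ≤ X) :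
    T3 x₀ y₀ X Y (fun η τ => R η τ * U η τ) ≤
      T3 x₀ y₀ X Y (fun η τ => R η τ * P η τ) *
        Real.exp (T3 x₀ y₀ X Y (fun η τ => R η τ * Q η τ)) := by
  -- abbreviations
  set a : ℝ → ℝ := fun η => ∫ τ in y₀..Y, R η τ * P η τ with ha_def
  set b : ℝ → ℝ := fun η => ∫ τ in y₀..Y, R η τ * Q η τ with hb_def
  set h : ℝ → ℝ := fun η => ∫ τ in y₀..Y, R η τ * U η τ with hh_def
  have hRP : Continuous fun z : ℝ × ℝ => R z.1 z.2 * P z.1 z.2 := hR.mul hP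
  have hRQ : Continuous fun z : ℝ × ℝ => R z.1 z.2 * Q z.1 z.2 := hR.mul hQ
  have hRU : Continuous fun z : ℝ × ℝ => R z.1 z.2 * U z.1 z.2 := hR.mul hU
  have hac : Continuous a := inner_cont hRP y₀ Y
  have hbc : Continuous b := inner_cont hRQ y₀ Y
  have hhc : Continuous h := inner_cont hRU y₀ Y
  have han : ∀ η, 0 ≤ a η := fun η =>
    intervalIntegral.integral_nonneg hY fun τ _ => mul_nonneg (hRn _ _) (hPn _ _)
  have hbn : ∀ η, 0 ≤ b η := fun η =>
    intervalIntegral.integral_nonneg hY fun τ _ => mul_nonneg (hRn _ _) (hQn _ _)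
  have hhn : ∀ η, 0 ≤ h η := fun η =>
    intervalIntegral.integral_nonneg hY fun τ _ => mul_nonneg (hRn _ _) (hUn _ _)
  set Z : ℝ → ℝ := fun x => D2 x₀ x h with hZ_def
  set A : ℝ → ℝ := fun x => D2 x₀ x a with hA_def
  set β : ℝ → ℝ := fun s => ∫ η in x₀..s, b η with hβ_def
  set B : ℝ → ℝ := fun x => ∫ s in x₀..x, β s with hB_def
  set E : ℝ → ℝ := fun x => Real.exp (B x) with hE_def
  have hZc : Continuous Z := D2_cont x₀ hhc
  have hAc : Continuous A := D2_cont x₀ hac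
  have hβc : Continuous β := prim_cont x₀ hbc
  have hBc : Continuous B := prim_cont x₀ hβc
  have hEc : Continuous E := Real.continuous_exp.comp hBc
  have hEn : ∀ x, 0 < E x := fun x => Real.exp_pos _
  have hβn : ∀ s, x₀ ≤ s → 0 ≤ β s := fun s hs =>
    intervalIntegral.integral_nonneg hs fun η _ => hbn η
  -- B monotone on [x₀, ∞)
  have hBmono : ∀ s t, x₀ ≤ s → s ≤ t → B s ≤ B t := by
    intro s t hs hst
    have hadd := intervalIntegral.integral_add_adjacent_intervals (μ := volume)
      (hβc.intervalIntegrable x₀ s) (hβc.intervalIntegrable s t)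
    have : 0 ≤ ∫ σ in s..t, β σ :=
      intervalIntegral.integral_nonneg hst fun σ hσ => hβn σ (hs.trans hσ.1)
    simp only [hB_def]; rw [← hadd]; linarith
  have hAmono : ∀ s t, x₀ ≤ s → s ≤ t → A s ≤ A t := fun s t hs hst =>
    D2_mono_right hs hst hac fun v _ => han v
  have hAn : ∀ x, x₀ ≤ x → 0 ≤ A x := fun x hx => D2_nonneg hx fun t _ => han t
  -- key2 : double integral of b·E is at most E x - 1
  have key2 : ∀ x, x₀ ≤ x → D2 x₀ x (fun η => b η * E η) ≤ E x - 1 := by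
    intro x hx
    have hBd : ∀ s : ℝ, HasDerivAt B (β s) s := by
      intro s
      exact intervalIntegral.integral_hasDerivAt_right (hβc.intervalIntegrable x₀ s)
        (hβc.stronglyMeasurableAtFilter volume (nhds s)) hβc.continuousAt
    have hEd : ∀ s : ℝ, HasDerivAt E (β s * E s) s := by
      intro s
      simpa [hE_def, mul_comm] using (hBd s).exp
    have hftc : (∫ s in x₀..x, β s * E s) = E x - E x₀ :=
      intervalIntegral.integral_eq_sub_of_hasDerivAt (fun s _ => hEd s)
        ((hβc.mul hEc).intervalIntegrable _ _)
    have hEx₀ : E x₀ = 1 := by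
      simp [hE_def, hB_def, intervalIntegral.integral_same]
    rw [D2, ← hEx₀, ← hftc]
    apply intervalIntegral.integral_mono_on hx
      ((prim_cont x₀ (hbc.mul hEc)).intervalIntegrable _ _)
      ((hβc.mul hEc).intervalIntegrable _ _)
    intro s hs
    have : (∫ η in x₀..s, b η * E η) ≤ ∫ η in x₀..s, b η * E s := by
      apply intervalIntegral.integral_mono_on hs.1 ((hbc.mul hEc).intervalIntegrable _ _)
        ((hbc.mul continuous_const).intervalIntegrable _ _)
      intro η hη
      exact mul_le_mul_of_nonneg_left
        (Real.exp_le_exp.2 (hBmono η s hη.1 hη.2)) (hbn η)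
    calc (∫ η in x₀..s, b η * E η) ≤ ∫ η in x₀..s, b η * E s := this
      _ = β s * E s := by rw [intervalIntegral.integral_mul_const]
  -- key1 : Z x ≤ A x + ∫∫ b Z
  have key1 : ∀ x, x₀ ≤ x → Z x ≤ A x + D2 x₀ x (fun η => b η * Z η) := by
    intro x hx
    have hptwise : ∀ η ∈ Icc x₀ x, h η ≤ a η + b η * Z η := by
      intro η hη
      have hZη : ∀ τ, τ ∈ Icc y₀ Y → T3 x₀ y₀ η τ (fun η' τ' => R η' τ' * U η' τ') ≤ Z η := by
        intro τ hτ
        apply D2_mono hη.1 (inner_cont hRU y₀ τ) hhc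
        intro η' _
        have hadd := intervalIntegral.integral_add_adjacent_intervals (μ := volume)
          ((cont_right (fun a b => R a b * U a b) hRU η').intervalIntegrable y₀ τ)
          ((cont_right (fun a b => R a b * U a b) hRU η').intervalIntegrable τ Y)
        have hnn : 0 ≤ ∫ τ' in τ..Y, R η' τ' * U η' τ' :=
          intervalIntegral.integral_nonneg hτ.2 fun τ' _ => mul_nonneg (hRn _ _) (hUn _ _)
        show (∫ τ' in y₀..τ, R η' τ' * U η' τ') ≤ h η'
        simp only [hh_def]; rw [← hadd]; linarith
      have step : (∫ τ in y₀..Y, R η τ * U η τ) ≤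
          ∫ τ in y₀..Y, (R η τ * P η τ + R η τ * Q η τ * Z η) := by
        apply intervalIntegral.integral_mono_on hY ((cont_right (fun a b => R a b * U a b) hRU η).intervalIntegrable _ _)
          (((cont_right (fun a b => R a b * P a b) hRP η).add ((cont_right (fun a b => R a b * Q a b) hRQ η).mul continuous_const)).intervalIntegrable _ _)
        intro τ hτ
        have hUb : U η τ ≤ P η τ + Q η τ * Z η := by
          refine (hmain η τ hη.1 hτ.1).trans ?_
          have := hZη τ hτ
          nlinarith [hQn η τ]
        show R η τ * U η τ ≤ R η τ * P η τ + R η τ * Q η τ * Z η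
        nlinarith [hRn η τ, hUn η τ, hPn η τ, hQn η τ]
      refine step.trans ?_
      rw [intervalIntegral.integral_add (f := fun τ => R η τ * P η τ) (g := fun τ => R η τ * Q η τ * Z η) ((cont_right (fun a b => R a b * P a b) hRP η).intervalIntegrable _ _)
        (((cont_right (fun a b => R a b * Q a b) hRQ η).mul continuous_const).intervalIntegrable _ _),
        intervalIntegral.integral_mul_const]
    calc Z x ≤ D2 x₀ x (fun η => a η + b η * Z η) :=
          D2_mono hx hhc (hac.add (hbc.mul hZc)) hptwise
      _ = A x + D2 x₀ x (fun η => b η * Z η) := D2_add hac (hbc.mul hZc)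
  -- Gronwall via first crossing
  have claim : ∀ ε : ℝ, 0 < ε → Z X < (A X + ε) * E X := by
    intro ε hε
    by_contra hcon
    push_neg at hcon
    set W : ℝ → ℝ := fun t => (A t + ε) * E t with hW_def
    have hWc : Continuous W := (hAc.add continuous_const).mul hEc
    set S : Set ℝ := Icc x₀ X ∩ {t | W t ≤ Z t} with hS_def
    have hSne : S.Nonempty := ⟨X, ⟨hX, le_rfl⟩, hcon⟩
    have hScl : IsClosed S := isClosed_Icc.inter (isClosed_le hWc hZc)
    have hSbd : BddBelow S := ⟨x₀, fun t ht => ht.1.1⟩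
    set c := sInf S with hc_def
    have hcS : c ∈ S := hScl.csInf_mem hSne hSbd
    have hZx₀ : Z x₀ = 0 := by simp [hZ_def, D2]
    have hWx₀ : W x₀ = ε := by
      have hA0 : A x₀ = 0 := by simp [hA_def, D2]
      have hB0 : B x₀ = 0 := by simp [hB_def]
      simp [hW_def, hE_def, hA0, hB0]
    have hx₀c : x₀ < c := by
      rcases lt_or_eq_of_le hcS.1.1 with h' | h'
      · exact h'
      · exfalso
        have := hcS.2
        rw [← h'] at this
        simp only [Set.mem_setOf_eq] at this
        rw [hWx₀, hZx₀] at this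
        linarith
    have hlt : ∀ t ∈ Ico x₀ c, Z t < W t := by
      intro t ht
      by_contra h'
      push_neg at h'
      have : t ∈ S := ⟨⟨ht.1, ht.2.le.trans hcS.1.2⟩, h'⟩
      exact absurd (csInf_le hSbd this) (not_le.2 ht.2)
    have hle : ∀ t ∈ Icc x₀ c, Z t ≤ W t := by
      have hsub : Ico x₀ c ⊆ {t | Z t ≤ W t} := fun t ht => (hlt t ht).le
      have hclosed : IsClosed {t | Z t ≤ W t} := isClosed_le hZc hWc
      intro t ht
      have : Icc x₀ c ⊆ {t | Z t ≤ W t} := by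
        rw [← closure_Ico hx₀c.ne]
        exact hclosed.closure_subset_iff.2 hsub
      exact this ht
    -- contradiction at c
    have hcx₀ : x₀ ≤ c := hcS.1.1
    have hstep1 : D2 x₀ c (fun η => b η * Z η) ≤
        D2 x₀ c (fun η => (A c + ε) * (b η * E η)) := by
      apply D2_mono hcx₀ (hbc.mul hZc) (continuous_const.mul (hbc.mul hEc))
      intro η hη
      have h1 : Z η ≤ W η := hle η hη
      have h2 : A η ≤ A c := hAmono η c hη.1 hη.2
      have h3 : 0 ≤ b η := hbn η
      have h4 : 0 < E η := hEn η
      simp only [hW_def] at h1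
      have h5 : b η * Z η ≤ b η * ((A η + ε) * E η) := mul_le_mul_of_nonneg_left h1 h3
      have h6 : A η * (b η * E η) ≤ A c * (b η * E η) :=
        mul_le_mul_of_nonneg_right h2 (mul_nonneg h3 h4.le)
      show b η * Z η ≤ (A c + ε) * (b η * E η)
      nlinarith
    have hstep2 : D2 x₀ c (fun η => (A c + ε) * (b η * E η)) ≤ (A c + ε) * (E c - 1) := by
      rw [D2_const_mul]
      exact mul_le_mul_of_nonneg_left (key2 c hcx₀) (by linarith [hAn c hcx₀])
    have hfinal : Z c ≤ W c - ε := by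
      have := key1 c hcx₀
      have hWc' : W c = (A c + ε) * E c := rfl
      nlinarith
    have := hcS.2
    simp only [Set.mem_setOf_eq] at this
    linarith
  -- conclude from the claim
  have hgoal : Z X ≤ A X * E X := by
    by_contra hcon
    push_neg at hcon
    have hEX := hEn X
    set ε : ℝ := (Z X - A X * E X) / E X with hε_def
    have hεpos : 0 < ε := div_pos (by linarith) hEX
    have := claim ε hεpos
    have heq : (A X + ε) * E X = Z X := by
      have hcancel : ε * E X = Z X - A X * E X :=
        div_mul_cancel₀ _ (ne_of_gt hEX)
      rw [add_mul]; linarith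
    rw [heq] at this
    exact lt_irrefl _ this
  exact hgoal

theorem stmt_8 (x₀ y₀ : ℝ) (g : ℝ → ℝ → ℝ) (K : ℝ → ℝ → ℝ → ℝ → ℝ → ℝ)
    (p q r : ℝ → ℝ → ℝ) (u : ℝ → ℝ → ℝ)
    (hg_cont : ContinuousOn (fun z : ℝ × ℝ => g z.1 z.2) (Set.Ici x₀ ×ˢ Set.Ici y₀))
    (hK_cont : ContinuousOn
      (fun z : ℝ × ℝ × ℝ × ℝ × ℝ => K z.1 z.2.1 z.2.2.1 z.2.2.2.1 z.2.2.2.2)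
      (Set.Ici x₀ ×ˢ Set.Ici y₀ ×ˢ Set.Ici x₀ ×ˢ Set.Ici y₀ ×ˢ (Set.univ : Set ℝ)))
    (hp_cont : ContinuousOn (fun z : ℝ × ℝ => p z.1 z.2) (Set.Ici x₀ ×ˢ Set.Ici y₀))
    (hq_cont : ContinuousOn (fun z : ℝ × ℝ => q z.1 z.2) (Set.Ici x₀ ×ˢ Set.Ici y₀))
    (hr_cont : ContinuousOn (fun z : ℝ × ℝ => r z.1 z.2) (Set.Ici x₀ ×ˢ Set.Ici y₀))
    (hp_nonneg : ∀ x y, x₀ ≤ x → y₀ ≤ y → 0 ≤ p x y)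
    (hq_nonneg : ∀ x y, x₀ ≤ x → y₀ ≤ y → 0 ≤ q x y)
    (hr_nonneg : ∀ x y, x₀ ≤ x → y₀ ≤ y → 0 ≤ r x y)
    (hK_lip : ∀ x y η τ, x₀ ≤ x → y₀ ≤ y → x₀ ≤ η → y₀ ≤ τ → ∀ a b : ℝ,
      |K x y η τ a - K x y η τ b| ≤ q x y * r η τ * |a - b|)
    (hgK_bound : ∀ x y, x₀ ≤ x → y₀ ≤ y →
      |g x y + ∫ s in x₀..x, ∫ η in x₀..s, ∫ τ in y₀..y, K x y η τ 0| ≤ p x y)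
    (hu_cont : ContinuousOn (fun z : ℝ × ℝ => u z.1 z.2) (Set.Ici x₀ ×ˢ Set.Ici y₀))
    (hu_sol : ∀ x y, x₀ ≤ x → y₀ ≤ y →
      u x y = g x y + ∫ s in x₀..x, ∫ η in x₀..s, ∫ τ in y₀..y, K x y η τ (u η τ)) :
    ∀ x y, x₀ ≤ x → y₀ ≤ y →
      |u x y| ≤ p x y + q x y *
        (∫ s in x₀..x, ∫ η in x₀..s, ∫ τ in y₀..y, r η τ * p η τ) *
        Real.exp (∫ s in x₀..x, ∫ η in x₀..s, ∫ τ in y₀..y, r η τ * q η τ) := by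
  -- clamped versions, globally continuous
  set P : ℝ → ℝ → ℝ := fun a b => p (max a x₀) (max b y₀) with hP_def
  set Q : ℝ → ℝ → ℝ := fun a b => q (max a x₀) (max b y₀) with hQ_def
  set R : ℝ → ℝ → ℝ := fun a b => r (max a x₀) (max b y₀) with hR_def
  set U : ℝ → ℝ → ℝ := fun a b => |u (max a x₀) (max b y₀)| with hU_def
  have hmemp : ∀ z : ℝ × ℝ, (max z.1 x₀, max z.2 y₀) ∈ Set.Ici x₀ ×ˢ Set.Ici y₀ :=
    fun z => ⟨Set.mem_Ici.2 (le_max_right _ _), Set.mem_Ici.2 (le_max_right _ _)⟩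
  have hclamp : Continuous fun z : ℝ × ℝ => (max z.1 x₀, max z.2 y₀) :=
    (continuous_fst.max continuous_const).prodMk (continuous_snd.max continuous_const)
  have hPc : Continuous fun z : ℝ × ℝ => P z.1 z.2 := hp_cont.comp_continuous hclamp hmemp
  have hQc : Continuous fun z : ℝ × ℝ => Q z.1 z.2 := hq_cont.comp_continuous hclamp hmemp
  have hRc : Continuous fun z : ℝ × ℝ => R z.1 z.2 := hr_cont.comp_continuous hclamp hmemp
  have hUc : Continuous fun z : ℝ × ℝ => U z.1 z.2 :=
    (hu_cont.comp_continuous hclamp hmemp).abs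
  have hPn : ∀ x y, 0 ≤ P x y := fun x y =>
    hp_nonneg _ _ (le_max_right _ _) (le_max_right _ _)
  have hQn : ∀ x y, 0 ≤ Q x y := fun x y =>
    hq_nonneg _ _ (le_max_right _ _) (le_max_right _ _)
  have hRn : ∀ x y, 0 ≤ R x y := fun x y =>
    hr_nonneg _ _ (le_max_right _ _) (le_max_right _ _)
  have hUn : ∀ x y, 0 ≤ U x y := fun x y => abs_nonneg _
  -- the main integral inequality for the clamped data
  have hmain : ∀ X Y, x₀ ≤ X → y₀ ≤ Y →
      U X Y ≤ P X Y + Q X Y * T3 x₀ y₀ X Y (fun η τ => R η τ * U η τ) := by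
    intro X Y hX hY
    have hmX : max X x₀ = X := max_eq_left hX
    have hmY : max Y y₀ = Y := max_eq_left hY
    -- clamped kernels with (X, Y) fixed
    set F : ℝ → ℝ → ℝ :=
      fun η τ => K X Y (max η x₀) (max τ y₀) (u (max η x₀) (max τ y₀)) with hF_def
    set F0 : ℝ → ℝ → ℝ := fun η τ => K X Y (max η x₀) (max τ y₀) 0 with hF0_def
    have hUu : Continuous fun z : ℝ × ℝ => u (max z.1 x₀) (max z.2 y₀) :=
      hu_cont.comp_continuous hclamp hmemp
    have hmem5 : ∀ (w : ℝ → ℝ → ℝ) (z : ℝ × ℝ),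
        ((X, Y, max z.1 x₀, max z.2 y₀, w z.1 z.2) : ℝ × ℝ × ℝ × ℝ × ℝ) ∈
          Set.Ici x₀ ×ˢ Set.Ici y₀ ×ˢ Set.Ici x₀ ×ˢ Set.Ici y₀ ×ˢ (Set.univ : Set ℝ) :=
      fun w z => ⟨hX, hY, Set.mem_Ici.2 (le_max_right _ _), Set.mem_Ici.2 (le_max_right _ _), trivial⟩
    have hFc : Continuous fun z : ℝ × ℝ => F z.1 z.2 := by
      apply hK_cont.comp_continuous (f := fun z : ℝ × ℝ =>
        ((X, Y, max z.1 x₀, max z.2 y₀, u (max z.1 x₀) (max z.2 y₀)) : ℝ × ℝ × ℝ × ℝ × ℝ))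
      · exact continuous_const.prodMk (continuous_const.prodMk
          ((continuous_fst.max continuous_const).prodMk
            ((continuous_snd.max continuous_const).prodMk hUu)))
      · exact hmem5 (fun a b => u (max a x₀) (max b y₀))
    have hF0c : Continuous fun z : ℝ × ℝ => F0 z.1 z.2 := by
      apply hK_cont.comp_continuous (f := fun z : ℝ × ℝ =>
        ((X, Y, max z.1 x₀, max z.2 y₀, (0 : ℝ)) : ℝ × ℝ × ℝ × ℝ × ℝ))
      · exact continuous_const.prodMk (continuous_const.prodMk
          ((continuous_fst.max continuous_const).prodMk
            ((continuous_snd.max continuous_const).prodMk continuous_const)))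
      · exact hmem5 (fun _ _ => (0 : ℝ))
    -- rewrite the solution equation using the clamped kernel
    have hIF : (∫ s in x₀..X, ∫ η in x₀..s, ∫ τ in y₀..Y, K X Y η τ (u η τ)) =
        T3 x₀ y₀ X Y F := by
      show T3 x₀ y₀ X Y (fun η τ => K X Y η τ (u η τ)) = T3 x₀ y₀ X Y F
      apply T3_congr hX hY
      intro η τ h1 _ h3 _
      simp only [hF_def, max_eq_left h1, max_eq_left h3]
    have hIF0 : (∫ s in x₀..X, ∫ η in x₀..s, ∫ τ in y₀..Y, K X Y η τ 0) =
        T3 x₀ y₀ X Y F0 := by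
      show T3 x₀ y₀ X Y (fun η τ => K X Y η τ 0) = T3 x₀ y₀ X Y F0
      apply T3_congr hX hY
      intro η τ h1 _ h3 _
      simp only [hF0_def, max_eq_left h1, max_eq_left h3]
    have hsol : u X Y = g X Y + T3 x₀ y₀ X Y F := by
      rw [← hIF]; exact hu_sol X Y hX hY
    have hbound : |g X Y + T3 x₀ y₀ X Y F0| ≤ p X Y := by
      rw [← hIF0]; exact hgK_bound X Y hX hY
    -- estimate the difference
    have hdiff : |T3 x₀ y₀ X Y F - T3 x₀ y₀ X Y F0| ≤
        Q X Y * T3 x₀ y₀ X Y (fun η τ => R η τ * U η τ) := by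
      rw [T3_sub hFc hF0c]
      refine (T3_abs hX hY (hFc.sub hF0c)).trans ?_
      have hmono : T3 x₀ y₀ X Y (fun η τ => |F η τ - F0 η τ|) ≤
          T3 x₀ y₀ X Y (fun η τ => Q X Y * (R η τ * U η τ)) := by
        apply T3_mono hX hY (hFc.sub hF0c).abs (continuous_const.mul (hRc.mul hUc))
        intro η τ
        have := hK_lip X Y (max η x₀) (max τ y₀) hX hY (le_max_right _ _) (le_max_right _ _)
          (u (max η x₀) (max τ y₀)) 0
        simp only [sub_zero] at this
        simpa [hF_def, hF0_def, hQ_def, hR_def, hU_def, hmX, hmY, mul_assoc] using this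
      refine hmono.trans ?_
      rw [T3_const_mul]
    calc U X Y = |u X Y| := by simp only [hU_def, hmX, hmY]
      _ = |(g X Y + T3 x₀ y₀ X Y F0) + (T3 x₀ y₀ X Y F - T3 x₀ y₀ X Y F0)| := by
          rw [hsol]; ring_nf
      _ ≤ |g X Y + T3 x₀ y₀ X Y F0| + |T3 x₀ y₀ X Y F - T3 x₀ y₀ X Y F0| := abs_add_le _ _
      _ ≤ P X Y + Q X Y * T3 x₀ y₀ X Y (fun η τ => R η τ * U η τ) := by
          have : P X Y = p X Y := by simp only [hP_def, hmX, hmY]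
          rw [this]; exact add_le_add hbound hdiff
  -- apply the Gronwall lemma
  intro x y hx hy
  have hkey := gronwall_aux x₀ y₀ y hy P Q R U hPc hQc hRc hUc hPn hQn hRn hUn hmain x hx
  have hmx : max x x₀ = x := max_eq_left hx
  have hmy : max y y₀ = y := max_eq_left hy
  have hRP : T3 x₀ y₀ x y (fun η τ => R η τ * P η τ) =
      ∫ s in x₀..x, ∫ η in x₀..s, ∫ τ in y₀..y, r η τ * p η τ := by
    show T3 x₀ y₀ x y (fun η τ => R η τ * P η τ) = T3 x₀ y₀ x y (fun η τ => r η τ * p η τ)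
    apply T3_congr hx hy
    intro η τ h1 _ h3 _
    simp only [hR_def, hP_def, max_eq_left h1, max_eq_left h3]
  have hRQ : T3 x₀ y₀ x y (fun η τ => R η τ * Q η τ) =
      ∫ s in x₀..x, ∫ η in x₀..s, ∫ τ in y₀..y, r η τ * q η τ := by
    show T3 x₀ y₀ x y (fun η τ => R η τ * Q η τ) = T3 x₀ y₀ x y (fun η τ => r η τ * q η τ)
    apply T3_congr hx hy
    intro η τ h1 _ h3 _
    simp only [hR_def, hQ_def, max_eq_left h1, max_eq_left h3]
  have hstart : |u x y| ≤ p x y + q x y * T3 x₀ y₀ x y (fun η τ => R η τ * U η τ) := by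
    have := hmain x y hx hy
    simpa only [hU_def, hP_def, hQ_def, hmx, hmy] using this
  have hqn := hq_nonneg x y hx hy
  calc |u x y| ≤ p x y + q x y * T3 x₀ y₀ x y (fun η τ => R η τ * U η τ) := hstart
    _ ≤ p x y + q x y * (T3 x₀ y₀ x y (fun η τ => R η τ * P η τ) *
        Real.exp (T3 x₀ y₀ x y (fun η τ => R η τ * Q η τ))) := by
        have := mul_le_mul_of_nonneg_left hkey hqn
        linarith
    _ = p x y + q x y *
        (∫ s in x₀..x, ∫ η in x₀..s, ∫ τ in y₀..y, r η τ * p η τ) *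
        Real.exp (∫ s in x₀..x, ∫ η in x₀..s, ∫ τ in y₀..y, r η τ * q η τ) := by
        rw [hRP, hRQ]; ring
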